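/- (Lemma 3.3: weighted L² bound for the rescaled fractional kernel operator.) Let δ < α < 1. There exists a constant C > 0, depending only on δ, γ and α, such that for every continuously differentiable function v : [0,1] → ℝ, ∫_0^1 (1-t)^α t^{2/γ - 1} · ( (1/Γ(1-δ)) ∫_0^t (t^{1/γ} - z^{1/γ})^{-δ} v'(z) dz )² dt ≤ C ∫_0^1 (1-t)^{1-α} (v'(t))² dt. -/

import Mathlib

open MeasureTheory Real Set
open scoped ENNReal

/-- The ψ-Caputo derivative for `ψ(t)=t^{1/γ}` on `(0,1)`, written in terms of `v'`:
`^C D^{δ,ψ}_t v(t) = (1/Γ(1-δ)) ∫_0^t (t^{1/γ} - z^{1/γ})^{-δ} v'(z) dz`. -/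
noncomputable def psiCaputo (δ γ : ℝ) (v' : ℝ → ℝ) (t : ℝ) : ℝ :=
  (1 / Real.Gamma (1 - δ)) * ∫ z in (0:ℝ)..t, (t ^ (1/γ) - z ^ (1/γ)) ^ (-δ) * v' z

section
variable {δ γ α : ℝ} (hδ0 : 0 < δ) (hδ1 : δ < 1) (hγ0 : 0 < γ) (hγ1 : γ ≤ 1)
    (hα1 : δ < α) (hα2 : α < 1)

include hδ0 hδ1 in
lemma kernelInt {a b : ℝ} (hab : a ≤ b) :
    IntegrableOn (fun x => (b - x) ^ (-δ)) (Ioc a b) ∧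
    ∫⁻ x in Ioc a b, ENNReal.ofReal ((b - x) ^ (-δ)) =
      ENNReal.ofReal ((b - a) ^ (1 - δ) / (1 - δ)) := by
  have h1 : IntervalIntegrable (fun x : ℝ => x ^ (-δ)) volume 0 (b - a) :=
    intervalIntegral.intervalIntegrable_rpow' (by linarith)
  have h2 : IntervalIntegrable (fun x : ℝ => (b - x) ^ (-δ)) volume a b := by
    have := (h1.comp_sub_left b).symm
    norm_num at this
    exact this
  have hon : IntegrableOn (fun x => (b - x) ^ (-δ)) (Ioc a b) :=
    (intervalIntegrable_iff_integrableOn_Ioc_of_le hab).1 h2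
  refine ⟨hon, ?_⟩
  have hnn : 0 ≤ᵐ[volume.restrict (Ioc a b)] fun x => (b - x) ^ (-δ) := by
    filter_upwards [ae_restrict_mem measurableSet_Ioc] with x hx
    exact Real.rpow_nonneg (by linarith [hx.2]) _
  rw [← ofReal_integral_eq_lintegral_ofReal hon hnn]
  congr 1
  have : ∫ x in Ioc a b, (b - x) ^ (-δ) = ∫ x in a..b, (b - x) ^ (-δ) :=
    (intervalIntegral.integral_of_le hab).symm
  rw [this, intervalIntegral.integral_comp_sub_left (fun x => x ^ (-δ)) b]
  rw [integral_rpow (Or.inl (by linarith)), sub_self,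
    Real.zero_rpow (by linarith : -δ + 1 ≠ 0)]
  norm_num; ring_nf

include hδ0 hδ1 in
lemma kernelInt2 {a b : ℝ} (hab : a ≤ b) :
    ∫⁻ x in Ioc a b, ENNReal.ofReal ((x - a) ^ (-δ)) =
      ENNReal.ofReal ((b - a) ^ (1 - δ) / (1 - δ)) := by
  have h1 : IntervalIntegrable (fun x : ℝ => x ^ (-δ)) volume 0 (b - a) :=
    intervalIntegral.intervalIntegrable_rpow' (by linarith)
  have h2 : IntervalIntegrable (fun x : ℝ => (x - a) ^ (-δ)) volume a b := by
    have := h1.comp_sub_right a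
    norm_num at this
    exact this
  have hon : IntegrableOn (fun x => (x - a) ^ (-δ)) (Ioc a b) :=
    (intervalIntegrable_iff_integrableOn_Ioc_of_le hab).1 h2
  have hnn : 0 ≤ᵐ[volume.restrict (Ioc a b)] fun x => (x - a) ^ (-δ) := by
    filter_upwards [ae_restrict_mem measurableSet_Ioc] with x hx
    exact Real.rpow_nonneg (by linarith [hx.1]) _
  rw [← ofReal_integral_eq_lintegral_ofReal hon hnn]
  congr 1
  have : ∫ x in Ioc a b, (x - a) ^ (-δ) = ∫ x in a..b, (x - a) ^ (-δ) :=
    (intervalIntegral.integral_of_le hab).symm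
  rw [this, intervalIntegral.integral_comp_sub_right (fun x => x ^ (-δ)) a]
  rw [integral_rpow (Or.inl (by linarith)), sub_self,
    Real.zero_rpow (by linarith : -δ + 1 ≠ 0)]
  norm_num; ring_nf

include hδ0 in
lemma kbound {m t z : ℝ} (hm : 1 ≤ m)
    (ht : 0 < t) (hz : 0 < z) (hzt : z < t) :
    (t ^ m - z ^ m) ^ (-δ) ≤ t ^ (-((m - 1) * δ)) * (t - z) ^ (-δ) := by
  have h2 : z ^ (m - 1) ≤ t ^ (m - 1) := Real.rpow_le_rpow hz.le hzt.le (by linarith)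
  have hzm : z ^ (m - 1) * z = z ^ m := by
    rw [← Real.rpow_add_one hz.ne' (m - 1)]; ring_nf
  have htm : t ^ (m - 1) * t = t ^ m := by
    rw [← Real.rpow_add_one ht.ne' (m - 1)]; ring_nf
  have key : t ^ (m - 1) * (t - z) ≤ t ^ m - z ^ m := by nlinarith
  have pos : 0 < t ^ (m - 1) * (t - z) :=
    mul_pos (Real.rpow_pos_of_pos ht _) (by linarith)
  calc (t ^ m - z ^ m) ^ (-δ) ≤ (t ^ (m - 1) * (t - z)) ^ (-δ) :=
        Real.rpow_le_rpow_of_nonpos pos key (by linarith)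
    _ = (t ^ (m - 1)) ^ (-δ) * (t - z) ^ (-δ) :=
        Real.mul_rpow (Real.rpow_nonneg ht.le _) (by linarith)
    _ = t ^ (-((m - 1) * δ)) * (t - z) ^ (-δ) := by
        rw [← Real.rpow_mul ht.le]; ring_nf

include hδ0 hδ1 hγ0 hγ1 hα1 hα2 in
lemma key_pointwise (w : ℝ → ℝ) (hw : Continuous w) {t : ℝ} (ht : t ∈ Ioc (0:ℝ) 1) :
    ENNReal.ofReal ((1 - t) ^ α * t ^ (2/γ - 1) * (psiCaputo δ γ w t) ^ 2) ≤
      ENNReal.ofReal (1 / ((1 - δ) * Real.Gamma (1 - δ) ^ 2)) *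
        (ENNReal.ofReal ((1 - t) ^ α) *
          ∫⁻ z in Ioc 0 t, ENNReal.ofReal ((t - z) ^ (-δ)) * ENNReal.ofReal (w z ^ 2)) := by
  obtain ⟨ht0, ht1⟩ := ht
  have hα0 : 0 < α := hδ0.trans hα1
  have hd : 0 < 1 - δ := by linarith
  have hG : 0 < Real.Gamma (1 - δ) := Real.Gamma_pos_of_pos hd
  set G := Real.Gamma (1 - δ) with hGdef
  have hm : 1 ≤ 1/γ := by rw [le_div_iff₀ hγ0]; linarith
  set m := 1/γ with hmdef
  set I := ∫ z in (0:ℝ)..t, (t ^ m - z ^ m) ^ (-δ) * w z with hIdef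
  set c : ℝ := t ^ (-((m - 1) * δ)) with hcdef
  have hcnn : 0 ≤ c := Real.rpow_nonneg ht0.le _
  set u : ℝ → ℝ≥0∞ := fun z => ENNReal.ofReal ((t - z) ^ (-δ/2)) with hudef
  set g : ℝ → ℝ≥0∞ := fun z => ENNReal.ofReal ((t - z) ^ (-δ/2)) * ENNReal.ofReal |w z|
    with hgdef
  set B : ℝ≥0∞ := ∫⁻ z in Ioc 0 t, ENNReal.ofReal ((t - z) ^ (-δ)) * ENNReal.ofReal (w z ^ 2)
    with hBdef
  set A : ℝ≥0∞ := ENNReal.ofReal (t ^ (1 - δ) / (1 - δ)) with hAdef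
  have hI1 : ENNReal.ofReal |I| ≤
      ∫⁻ z in Ioc 0 t, (‖(t ^ m - z ^ m) ^ (-δ) * w z‖₊ : ℝ≥0∞) := by
    rw [← Real.enorm_eq_ofReal_abs, hIdef, intervalIntegral.integral_of_le ht0.le]
    exact enorm_integral_le_lintegral_enorm _
  have hI2 : (∫⁻ z in Ioc 0 t, (‖(t ^ m - z ^ m) ^ (-δ) * w z‖₊ : ℝ≥0∞)) ≤
      ENNReal.ofReal c * ∫⁻ z in Ioc 0 t, u z * g z := by
    rw [← lintegral_const_mul' _ _ ENNReal.ofReal_ne_top]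
    refine lintegral_mono_ae ((ae_restrict_iff' measurableSet_Ioc).2 (ae_of_all _ ?_))
    intro z hz
    have hzt : z ≤ t := hz.2
    have htz : (0:ℝ) ≤ t - z := by linarith
    have hann : 0 ≤ (t - z) ^ (-δ/2) := Real.rpow_nonneg htz _
    have hknn : 0 ≤ (t ^ m - z ^ m) ^ (-δ) :=
      Real.rpow_nonneg (sub_nonneg.2 (Real.rpow_le_rpow hz.1.le hzt (by positivity))) _
    have hkb : (t ^ m - z ^ m) ^ (-δ) ≤ c * ((t - z) ^ (-δ/2) * (t - z) ^ (-δ/2)) := by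
      rcases eq_or_lt_of_le hzt with h | h
      · rw [h, sub_self, Real.zero_rpow (by linarith : -δ ≠ 0)]
        exact mul_nonneg hcnn
          (mul_nonneg (Real.rpow_nonneg (by linarith) _) (Real.rpow_nonneg (by linarith) _))
      · have h1 := kbound hδ0 (m := m) hm ht0 hz.1 h
        have h2 : (t - z) ^ (-δ) = (t - z) ^ (-δ/2) * (t - z) ^ (-δ/2) := by
          rw [← Real.rpow_add (by linarith : (0:ℝ) < t - z)]; norm_num
        rw [← h2]; exact h1
    calc (‖(t ^ m - z ^ m) ^ (-δ) * w z‖₊ : ℝ≥0∞)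
        = ENNReal.ofReal ((t ^ m - z ^ m) ^ (-δ) * |w z|) := by
          rw [← enorm_eq_nnnorm, Real.enorm_eq_ofReal_abs, abs_mul, abs_of_nonneg hknn]
      _ ≤ ENNReal.ofReal ((c * ((t - z) ^ (-δ/2) * (t - z) ^ (-δ/2))) * |w z|) :=
          ENNReal.ofReal_le_ofReal (mul_le_mul_of_nonneg_right hkb (abs_nonneg _))
      _ = ENNReal.ofReal c * (u z * g z) := by
          have hre : (c * ((t - z) ^ (-δ/2) * (t - z) ^ (-δ/2))) * |w z|
              = c * ((t - z) ^ (-δ/2) * ((t - z) ^ (-δ/2) * |w z|)) := by ring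
          rw [hre, ENNReal.ofReal_mul hcnn, ENNReal.ofReal_mul hann, ENNReal.ofReal_mul hann]
  have hconj : Real.HolderConjugate 2 2 := Real.HolderConjugate.two_two
  have humeas : Measurable u := by
    apply ENNReal.measurable_ofReal.comp
    exact (measurable_const.sub measurable_id).pow_const _
  have hgmeas : Measurable g := by
    apply Measurable.mul humeas
    exact ENNReal.measurable_ofReal.comp (hw.measurable.abs)
  have hHolder : (∫⁻ z in Ioc 0 t, u z * g z) ≤
      (∫⁻ z in Ioc 0 t, u z ^ (2:ℝ)) ^ ((1:ℝ)/2) *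
        (∫⁻ z in Ioc 0 t, g z ^ (2:ℝ)) ^ ((1:ℝ)/2) := by
    simpa using ENNReal.lintegral_mul_le_Lp_mul_Lq (volume.restrict (Ioc 0 t)) hconj
      humeas.aemeasurable hgmeas.aemeasurable
  have hu2 : (∫⁻ z in Ioc 0 t, u z ^ (2:ℝ)) = A := by
    have hpt : ∀ z ∈ Ioc (0:ℝ) t, u z ^ (2:ℝ) = ENNReal.ofReal ((t - z) ^ (-δ)) := by
      intro z hz
      have htz : (0:ℝ) ≤ t - z := by linarith [hz.2]
      have hann : 0 ≤ (t - z) ^ (-δ/2) := Real.rpow_nonneg htz _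
      show ENNReal.ofReal ((t - z) ^ (-δ/2)) ^ (2:ℝ) = ENNReal.ofReal ((t - z) ^ (-δ))
      rw [ENNReal.ofReal_rpow_of_nonneg hann (by norm_num : (0:ℝ) ≤ 2)]
      congr 1
      rw [← Real.rpow_mul htz]; norm_num
    rw [setLIntegral_congr_fun measurableSet_Ioc hpt, hAdef]
    have := (kernelInt hδ0 hδ1 (le_of_lt ht0) (a := 0) (b := t)).2
    simpa using this
  have hg2 : (∫⁻ z in Ioc 0 t, g z ^ (2:ℝ)) = B := by
    rw [hBdef]
    refine setLIntegral_congr_fun measurableSet_Ioc ?_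
    intro z hz
    have htz : (0:ℝ) ≤ t - z := by linarith [hz.2]
    have hann : 0 ≤ (t - z) ^ (-δ/2) := Real.rpow_nonneg htz _
    show (ENNReal.ofReal ((t - z) ^ (-δ/2)) * ENNReal.ofReal |w z|) ^ (2:ℝ)
        = ENNReal.ofReal ((t - z) ^ (-δ)) * ENNReal.ofReal (w z ^ 2)
    rw [ENNReal.mul_rpow_of_nonneg _ _ (by norm_num : (0:ℝ) ≤ 2),
      ENNReal.ofReal_rpow_of_nonneg hann (by norm_num : (0:ℝ) ≤ 2),
      ENNReal.ofReal_rpow_of_nonneg (abs_nonneg _) (by norm_num : (0:ℝ) ≤ 2)]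
    congr 1
    · congr 1
      rw [← Real.rpow_mul htz]; norm_num
    · congr 1
      rw [show (2:ℝ) = ((2:ℕ):ℝ) by norm_num, Real.rpow_natCast, sq_abs]
  have hIb : ENNReal.ofReal |I| ≤
      ENNReal.ofReal c * (A ^ ((1:ℝ)/2) * B ^ ((1:ℝ)/2)) := by
    refine (hI1.trans hI2).trans ?_
    exact mul_le_mul_right (hHolder.trans_eq (by rw [hu2, hg2])) _
  have hpsi : psiCaputo δ γ w t = (1/G) * I := rfl
  have habs : (psiCaputo δ γ w t) ^ 2 = (1/G^2) * |I|^2 := by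
    rw [hpsi, mul_pow, ← sq_abs I]; ring
  have hFt : (1 - t) ^ α * t ^ (2/γ - 1) * (psiCaputo δ γ w t) ^ 2
      = ((1 - t) ^ α * t ^ (2/γ - 1) / G^2) * |I|^2 := by rw [habs]; ring
  have h1tnn : (0:ℝ) ≤ (1 - t) ^ α := Real.rpow_nonneg (by linarith) _
  have htexp : (0:ℝ) ≤ t ^ (2/γ - 1) := Real.rpow_nonneg ht0.le _
  have hdnn : (0:ℝ) ≤ (1 - t) ^ α * t ^ (2/γ - 1) / G^2 := by positivity
  rw [hFt, ENNReal.ofReal_mul hdnn, ENNReal.ofReal_pow (abs_nonneg _)]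
  calc ENNReal.ofReal ((1 - t) ^ α * t ^ (2/γ - 1) / G^2) * ENNReal.ofReal |I| ^ 2
      ≤ ENNReal.ofReal ((1 - t) ^ α * t ^ (2/γ - 1) / G^2) *
          (ENNReal.ofReal c * (A ^ ((1:ℝ)/2) * B ^ ((1:ℝ)/2))) ^ 2 :=
        mul_le_mul_right (pow_le_pow_left' hIb 2) _
    _ = (ENNReal.ofReal ((1 - t) ^ α * t ^ (2/γ - 1) / G^2) *
          (ENNReal.ofReal c ^ 2 * A)) * B := by
        rw [mul_pow, mul_pow, ← ENNReal.rpow_natCast (A ^ ((1:ℝ)/2)) 2,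
          ← ENNReal.rpow_natCast (B ^ ((1:ℝ)/2)) 2, ← ENNReal.rpow_mul, ← ENNReal.rpow_mul]
        norm_num
        ring
    _ ≤ (ENNReal.ofReal (1 / ((1 - δ) * G ^ 2)) * ENNReal.ofReal ((1 - t) ^ α)) * B := by
        refine mul_le_mul_left ?_ B
        rw [hAdef, ← ENNReal.ofReal_pow hcnn, ← ENNReal.ofReal_mul (pow_nonneg hcnn 2),
          ← ENNReal.ofReal_mul hdnn, ← ENNReal.ofReal_mul (by positivity)]
        refine ENNReal.ofReal_le_ofReal ?_
        set E : ℝ := 2/γ - 1 + (-((m - 1) * δ) + (-((m - 1) * δ) + (1 - δ))) with hEdef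
        have hEnn : 0 ≤ E := by
          have h2 : (0:ℝ) ≤ (1/γ) * (1 - δ) := by positivity
          rw [hEdef, hmdef]
          have hexp : 2/γ - 1 + (-((1/γ - 1) * δ) + (-((1/γ - 1) * δ) + (1 - δ)))
              = 2 * ((1/γ) * (1 - δ)) + δ := by ring
          rw [hexp]; linarith
        have hP : t ^ E = t ^ (2/γ - 1) * (c * (c * t ^ (1 - δ))) := by
          rw [hEdef, Real.rpow_add ht0, Real.rpow_add ht0, Real.rpow_add ht0, hcdef]
        have hP1 : t ^ (2/γ - 1) * (c * (c * t ^ (1 - δ))) ≤ 1 := by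
          rw [← hP]; exact Real.rpow_le_one ht0.le ht1 hEnn
        have hre : (1 - t) ^ α * t ^ (2/γ - 1) / G^2 * (c ^ 2 * (t ^ (1 - δ) / (1 - δ)))
            = ((1 - t) ^ α * (1 / ((1 - δ) * G ^ 2))) *
              (t ^ (2/γ - 1) * (c * (c * t ^ (1 - δ)))) := by
          have hGne : G ≠ 0 := ne_of_gt hG
          have hdne : (1 - δ) ≠ 0 := ne_of_gt hd
          field_simp
        rw [hre]
        calc ((1 - t) ^ α * (1 / ((1 - δ) * G ^ 2))) *
              (t ^ (2/γ - 1) * (c * (c * t ^ (1 - δ))))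
            ≤ ((1 - t) ^ α * (1 / ((1 - δ) * G ^ 2))) * 1 := by
              refine mul_le_mul_of_nonneg_left hP1 ?_
              positivity
          _ = 1 / ((1 - δ) * G ^ 2) * (1 - t) ^ α := by ring
    _ = ENNReal.ofReal (1 / ((1 - δ) * G ^ 2)) * (ENNReal.ofReal ((1 - t) ^ α) * B) := by
        rw [mul_assoc]

include hδ0 hδ1 hγ0 hγ1 hα1 hα2 in
lemma tonelli_step (w : ℝ → ℝ) (hw : Continuous w) :
    (∫⁻ t in Ioc (0:ℝ) 1, ENNReal.ofReal ((1 - t) ^ α) *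
        ∫⁻ z in Ioc 0 t, ENNReal.ofReal ((t - z) ^ (-δ)) * ENNReal.ofReal (w z ^ 2)) ≤
      ENNReal.ofReal (1 / (1 - δ)) *
        ∫⁻ z in Ioc (0:ℝ) 1, ENNReal.ofReal ((1 - z) ^ (1 - α) * w z ^ 2) := by
  have hα0 : 0 < α := hδ0.trans hα1
  have hd : 0 < 1 - δ := by linarith
  set H : ℝ → ℝ → ℝ≥0∞ := fun t z => ENNReal.ofReal ((1 - t) ^ α) *
    (ENNReal.ofReal ((t - z) ^ (-δ)) * ENNReal.ofReal (w z ^ 2)) with hHdef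
  set S : Set (ℝ × ℝ) := {p : ℝ × ℝ | p.2 ≤ p.1} with hSdef
  have hS : MeasurableSet S := measurableSet_le measurable_snd measurable_fst
  set Φ : ℝ → ℝ → ℝ≥0∞ := fun t z => S.indicator (fun q => H q.1 q.2) (t, z) with hΦdef
  have hHm : Measurable fun p : ℝ × ℝ => H p.1 p.2 := by
    apply Measurable.fun_mul
    · exact ENNReal.measurable_ofReal.comp ((measurable_const.sub measurable_fst).pow_const _)
    · apply Measurable.fun_mul
      · exact ENNReal.measurable_ofReal.comp ((measurable_fst.sub measurable_snd).pow_const _)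
      · exact ENNReal.measurable_ofReal.comp ((hw.measurable.comp measurable_snd).pow_const _)
  have hΦm : Measurable (Function.uncurry Φ) := by
    have : Function.uncurry Φ = S.indicator fun q => H q.1 q.2 := by
      funext p; simp [Function.uncurry, hΦdef]
    rw [this]
    exact hHm.indicator hS
  have step1 : ∀ t ∈ Ioc (0:ℝ) 1,
      (ENNReal.ofReal ((1 - t) ^ α) *
        ∫⁻ z in Ioc 0 t, ENNReal.ofReal ((t - z) ^ (-δ)) * ENNReal.ofReal (w z ^ 2))
      = ∫⁻ z in Ioc (0:ℝ) 1, Φ t z := by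
    intro t ht
    have h1 : (fun z => Φ t z) = (Iic t).indicator (H t) := by
      funext z
      simp only [hΦdef, Set.indicator_apply, hSdef, Set.mem_setOf_eq, Set.mem_Iic]
    have h2 : Iic t ∩ Ioc (0:ℝ) 1 = Ioc 0 t := by
      ext x
      simp only [Set.mem_inter_iff, Set.mem_Iic, Set.mem_Ioc]
      exact ⟨fun h => ⟨h.2.1, h.1⟩, fun h => ⟨h.2, h.1, h.2.trans ht.2⟩⟩
    rw [h1, lintegral_indicator measurableSet_Iic, Measure.restrict_restrict measurableSet_Iic,
      h2, ← lintegral_const_mul' _ _ ENNReal.ofReal_ne_top]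
  have step4 : ∀ z ∈ Ioc (0:ℝ) 1,
      (∫⁻ t in Ioc (0:ℝ) 1, Φ t z) ≤
        ENNReal.ofReal (1 / (1 - δ)) * ENNReal.ofReal ((1 - z) ^ (1 - α) * w z ^ 2) := by
    intro z hz
    have h1 : (fun t => Φ t z) = (Ici z).indicator (fun t => H t z) := by
      funext t
      simp only [hΦdef, Set.indicator_apply, hSdef, Set.mem_setOf_eq, Set.mem_Ici]
    have h2 : Ici z ∩ Ioc (0:ℝ) 1 = Icc z 1 := by
      ext x
      simp only [Set.mem_inter_iff, Set.mem_Ici, Set.mem_Ioc, Set.mem_Icc]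
      exact ⟨fun h => ⟨h.1, h.2.2⟩, fun h => ⟨h.1, hz.1.trans_le h.1, h.2⟩⟩
    rw [h1, lintegral_indicator measurableSet_Ici, Measure.restrict_restrict measurableSet_Ici,
      h2, ← Measure.restrict_congr_set Ioc_ae_eq_Icc]
    have h3 : ∀ t, H t z = ENNReal.ofReal (w z ^ 2) *
        (ENNReal.ofReal ((1 - t) ^ α) * ENNReal.ofReal ((t - z) ^ (-δ))) := by
      intro t; rw [hHdef]; ring
    calc (∫⁻ t in Ioc z 1, H t z)
        = ENNReal.ofReal (w z ^ 2) *
            ∫⁻ t in Ioc z 1, ENNReal.ofReal ((1 - t) ^ α) * ENNReal.ofReal ((t - z) ^ (-δ)) := by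
          rw [← lintegral_const_mul' _ _ ENNReal.ofReal_ne_top]
          exact lintegral_congr fun t => h3 t
      _ ≤ ENNReal.ofReal (w z ^ 2) *
            (ENNReal.ofReal ((1 - z) ^ α) * ∫⁻ t in Ioc z 1, ENNReal.ofReal ((t - z) ^ (-δ))) := by
          refine mul_le_mul_right ?_ _
          rw [← lintegral_const_mul' _ _ ENNReal.ofReal_ne_top]
          refine lintegral_mono_ae ((ae_restrict_iff' measurableSet_Ioc).2 (ae_of_all _ ?_))
          intro t ht
          refine mul_le_mul_left (ENNReal.ofReal_le_ofReal ?_) _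
          exact Real.rpow_le_rpow (by linarith [ht.2]) (by linarith [ht.1]) hα0.le
      _ = ENNReal.ofReal (w z ^ 2) *
            (ENNReal.ofReal ((1 - z) ^ α) * ENNReal.ofReal ((1 - z) ^ (1 - δ) / (1 - δ))) := by
          rw [kernelInt2 hδ0 hδ1 hz.2]
      _ ≤ ENNReal.ofReal (1 / (1 - δ)) * ENNReal.ofReal ((1 - z) ^ (1 - α) * w z ^ 2) := by
          rw [← ENNReal.ofReal_mul (Real.rpow_nonneg (by linarith [hz.2]) _),
            ← ENNReal.ofReal_mul (sq_nonneg _), ← ENNReal.ofReal_mul (by positivity)]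
          refine ENNReal.ofReal_le_ofReal ?_
          have hkey : (1 - z) ^ α * ((1 - z) ^ (1 - δ) / (1 - δ)) ≤ (1 - z) ^ (1 - α) / (1 - δ) := by
            rcases eq_or_lt_of_le hz.2 with h | h
            · rw [h, sub_self, Real.zero_rpow hα0.ne',
                Real.zero_rpow (by linarith : (1:ℝ) - α ≠ 0)]
              simp
            · have hz1 : (0:ℝ) < 1 - z := by linarith
              have hmul : (1 - z) ^ α * ((1 - z) ^ (1 - δ) / (1 - δ))
                  = (1 - z) ^ (α + (1 - δ)) / (1 - δ) := by
                rw [Real.rpow_add hz1]; ring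
              rw [hmul]
              have hnum : (1 - z) ^ (α + (1 - δ)) ≤ (1 - z) ^ (1 - α) :=
                Real.rpow_le_rpow_of_exponent_ge hz1 (by linarith [hz.1]) (by linarith)
              exact (div_le_div_iff_of_pos_right hd).mpr hnum
          calc w z ^ 2 * ((1 - z) ^ α * ((1 - z) ^ (1 - δ) / (1 - δ)))
              ≤ w z ^ 2 * ((1 - z) ^ (1 - α) / (1 - δ)) :=
                mul_le_mul_of_nonneg_left hkey (sq_nonneg _)
            _ = 1 / (1 - δ) * ((1 - z) ^ (1 - α) * w z ^ 2) := by ring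
  calc (∫⁻ t in Ioc (0:ℝ) 1, ENNReal.ofReal ((1 - t) ^ α) *
        ∫⁻ z in Ioc 0 t, ENNReal.ofReal ((t - z) ^ (-δ)) * ENNReal.ofReal (w z ^ 2))
      = ∫⁻ t in Ioc (0:ℝ) 1, ∫⁻ z in Ioc (0:ℝ) 1, Φ t z :=
        setLIntegral_congr_fun measurableSet_Ioc step1
    _ = ∫⁻ z in Ioc (0:ℝ) 1, ∫⁻ t in Ioc (0:ℝ) 1, Φ t z :=
        lintegral_lintegral_swap hΦm.aemeasurable
    _ ≤ ∫⁻ z in Ioc (0:ℝ) 1, ENNReal.ofReal (1 / (1 - δ)) *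
          ENNReal.ofReal ((1 - z) ^ (1 - α) * w z ^ 2) :=
        lintegral_mono_ae ((ae_restrict_iff' measurableSet_Ioc).2 (ae_of_all _ step4))
    _ = ENNReal.ofReal (1 / (1 - δ)) *
          ∫⁻ z in Ioc (0:ℝ) 1, ENNReal.ofReal ((1 - z) ^ (1 - α) * w z ^ 2) :=
        lintegral_const_mul' _ _ ENNReal.ofReal_ne_top

include hδ0 hδ1 hγ0 hγ1 hα1 hα2 in
lemma main_cont (w : ℝ → ℝ) (hw : Continuous w) :
    ∫ t in (0:ℝ)..1, (1 - t) ^ α * t ^ (2/γ - 1) * (psiCaputo δ γ w t) ^ 2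
      ≤ (1 / ((1 - δ)^2 * Real.Gamma (1 - δ)^2)) *
        ∫ t in (0:ℝ)..1, (1 - t) ^ (1 - α) * (w t) ^ 2 := by
  have hα0 : 0 < α := hδ0.trans hα1
  have hd : 0 < 1 - δ := by linarith
  have hG : 0 < Real.Gamma (1 - δ) := Real.Gamma_pos_of_pos hd
  set G := Real.Gamma (1 - δ) with hGdef
  set C : ℝ := 1 / ((1 - δ)^2 * G^2) with hCdef
  have hC : 0 < C := by positivity
  set F : ℝ → ℝ := fun t => (1 - t) ^ α * t ^ (2/γ - 1) * (psiCaputo δ γ w t) ^ 2 with hFdef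
  set R : ℝ → ℝ := fun z => (1 - z) ^ (1 - α) * (w z) ^ 2 with hRdef
  have hRcont : Continuous R := by
    have h1 : Continuous fun x : ℝ => x ^ (1 - α) := by
      apply continuous_iff_continuousAt.mpr
      intro x
      exact Real.continuousAt_rpow_const x _ (Or.inr (by linarith))
    exact (h1.comp (continuous_const.sub continuous_id)).mul (hw.pow 2)
  have hRnn : ∀ t ∈ Icc (0:ℝ) 1, 0 ≤ R t := fun t ht =>
    mul_nonneg (Real.rpow_nonneg (by linarith [ht.2]) _) (sq_nonneg _)
  have hRint : IntegrableOn R (Ioc 0 1) := hRcont.integrableOn_Ioc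
  have hRnn' : 0 ≤ᵐ[volume.restrict (Ioc (0:ℝ) 1)] R := by
    filter_upwards [ae_restrict_mem measurableSet_Ioc] with x hx
    exact hRnn x ⟨hx.1.le, hx.2⟩
  have hRlint : (∫⁻ z in Ioc (0:ℝ) 1, ENNReal.ofReal (R z))
      = ENNReal.ofReal (∫ z in Ioc (0:ℝ) 1, R z) :=
    (ofReal_integral_eq_lintegral_ofReal hRint hRnn').symm
  have hJr : 0 ≤ ∫ z in Ioc (0:ℝ) 1, R z :=
    setIntegral_nonneg measurableSet_Ioc fun z hz => hRnn z ⟨hz.1.le, hz.2⟩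
  have hReq : ∫ t in (0:ℝ)..1, R t = ∫ z in Ioc (0:ℝ) 1, R z :=
    intervalIntegral.integral_of_le zero_le_one
  by_cases hF : IntervalIntegrable F volume 0 1
  · have hFon : IntegrableOn F (Ioc 0 1) :=
      (intervalIntegrable_iff_integrableOn_Ioc_of_le zero_le_one).1 hF
    have hFnn : 0 ≤ᵐ[volume.restrict (Ioc (0:ℝ) 1)] F := by
      filter_upwards [ae_restrict_mem measurableSet_Ioc] with t ht
      exact mul_nonneg (mul_nonneg (Real.rpow_nonneg (by linarith [ht.2]) _)
        (Real.rpow_nonneg ht.1.le _)) (sq_nonneg _)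
    rw [intervalIntegral.integral_of_le zero_le_one,
      integral_eq_lintegral_of_nonneg_ae hFnn hFon.aestronglyMeasurable]
    have hchain : (∫⁻ t in Ioc (0:ℝ) 1, ENNReal.ofReal (F t)) ≤
        ENNReal.ofReal (C * ∫ z in Ioc (0:ℝ) 1, R z) := by
      calc (∫⁻ t in Ioc (0:ℝ) 1, ENNReal.ofReal (F t))
          ≤ ∫⁻ t in Ioc (0:ℝ) 1, ENNReal.ofReal (1 / ((1 - δ) * G ^ 2)) *
              (ENNReal.ofReal ((1 - t) ^ α) *
                ∫⁻ z in Ioc 0 t, ENNReal.ofReal ((t - z) ^ (-δ)) * ENNReal.ofReal (w z ^ 2)) :=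
            lintegral_mono_ae ((ae_restrict_iff' measurableSet_Ioc).2 (ae_of_all _
              fun t ht => key_pointwise hδ0 hδ1 hγ0 hγ1 hα1 hα2 w hw ht))
        _ = ENNReal.ofReal (1 / ((1 - δ) * G ^ 2)) *
              ∫⁻ t in Ioc (0:ℝ) 1, (ENNReal.ofReal ((1 - t) ^ α) *
                ∫⁻ z in Ioc 0 t, ENNReal.ofReal ((t - z) ^ (-δ)) * ENNReal.ofReal (w z ^ 2)) :=
            lintegral_const_mul' _ _ ENNReal.ofReal_ne_top
        _ ≤ ENNReal.ofReal (1 / ((1 - δ) * G ^ 2)) * (ENNReal.ofReal (1 / (1 - δ)) *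
              ∫⁻ z in Ioc (0:ℝ) 1, ENNReal.ofReal ((1 - z) ^ (1 - α) * w z ^ 2)) :=
            mul_le_mul_right (tonelli_step hδ0 hδ1 hγ0 hγ1 hα1 hα2 w hw) _
        _ = ENNReal.ofReal (C * ∫ z in Ioc (0:ℝ) 1, R z) := by
            have : (∫⁻ z in Ioc (0:ℝ) 1, ENNReal.ofReal ((1 - z) ^ (1 - α) * w z ^ 2))
                = ENNReal.ofReal (∫ z in Ioc (0:ℝ) 1, R z) := hRlint
            rw [this, ← ENNReal.ofReal_mul (by positivity), ← ENNReal.ofReal_mul (by positivity)]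
            congr 1
            rw [hCdef]
            have hGne : G ≠ 0 := ne_of_gt hG
            have hdne : (1 - δ) ≠ 0 := ne_of_gt hd
            field_simp
    calc (∫⁻ t in Ioc (0:ℝ) 1, ENNReal.ofReal (F t)).toReal
        ≤ (ENNReal.ofReal (C * ∫ z in Ioc (0:ℝ) 1, R z)).toReal :=
          ENNReal.toReal_mono ENNReal.ofReal_ne_top hchain
      _ = C * ∫ z in Ioc (0:ℝ) 1, R z := ENNReal.toReal_ofReal (mul_nonneg hC.le hJr)
      _ = C * ∫ t in (0:ℝ)..1, R t := by rw [hReq]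
  · rw [intervalIntegral.integral_undef hF]
    exact mul_nonneg hC.le (intervalIntegral.integral_nonneg zero_le_one hRnn)

end

/-- Weighted L² bound for the rescaled fractional kernel operator (Lemma 3.3). -/
theorem weighted_L2_bound_rescaled_kernel
    (δ γ α : ℝ) (hδ0 : 0 < δ) (hδ1 : δ < 1) (hγ0 : 0 < γ) (hγ1 : γ ≤ 1)
    (hα1 : δ < α) (hα2 : α < 1) :
    ∃ C : ℝ, 0 < C ∧ ∀ v v' : ℝ → ℝ,
      (∀ t ∈ Set.Icc (0:ℝ) 1, HasDerivAt v (v' t) t) →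
      ContinuousOn v' (Set.Icc (0:ℝ) 1) →
      ∫ t in (0:ℝ)..1, (1 - t) ^ α * t ^ (2/γ - 1) * (psiCaputo δ γ v' t) ^ 2
        ≤ C * ∫ t in (0:ℝ)..1, (1 - t) ^ (1 - α) * (v' t) ^ 2 := by
  have hd : 0 < 1 - δ := by linarith
  have hG : 0 < Real.Gamma (1 - δ) := Real.Gamma_pos_of_pos hd
  refine ⟨1 / ((1 - δ)^2 * Real.Gamma (1 - δ)^2), by positivity, ?_⟩
  intro v v' hv hv'
  set w : ℝ → ℝ := fun z => v' (min (max z 0) 1) with hwdef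
  have hmem : ∀ z : ℝ, min (max z 0) 1 ∈ Icc (0:ℝ) 1 := fun z =>
    ⟨le_min (le_max_right _ _) zero_le_one, min_le_right _ _⟩
  have hw : Continuous w := hv'.comp_continuous (by continuity) hmem
  have heq : ∀ z ∈ Icc (0:ℝ) 1, w z = v' z := by
    intro z hz
    rw [hwdef]
    simp only [max_eq_left hz.1, min_eq_left hz.2]
  have hpsieq : ∀ t ∈ Icc (0:ℝ) 1, psiCaputo δ γ v' t = psiCaputo δ γ w t := by
    intro t ht
    unfold psiCaputo
    congr 1
    apply intervalIntegral.integral_congr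
    intro z hz
    rw [uIcc_of_le ht.1] at hz
    have hz1 : z ∈ Icc (0:ℝ) 1 := ⟨hz.1, hz.2.trans ht.2⟩
    simp only [heq z hz1]
  have hLHS : ∫ t in (0:ℝ)..1, (1 - t) ^ α * t ^ (2/γ - 1) * (psiCaputo δ γ v' t) ^ 2
      = ∫ t in (0:ℝ)..1, (1 - t) ^ α * t ^ (2/γ - 1) * (psiCaputo δ γ w t) ^ 2 := by
    apply intervalIntegral.integral_congr
    intro t htm
    rw [uIcc_of_le zero_le_one] at htm
    simp only [hpsieq t htm]
  have hRHS : ∫ t in (0:ℝ)..1, (1 - t) ^ (1 - α) * (v' t) ^ 2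
      = ∫ t in (0:ℝ)..1, (1 - t) ^ (1 - α) * (w t) ^ 2 := by
    apply intervalIntegral.integral_congr
    intro t htm
    rw [uIcc_of_le zero_le_one] at htm
    simp only [heq t htm]
  rw [hLHS, hRHS]
  exact main_cont hδ0 hδ1 hγ0 hγ1 hα1 hα2 w hw
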